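/- If two reduced words i, i' ∈ R(u,v) are related by a non-trivial 2- or 3-move in position k, then φ⁺_{i,i'} ∘ φ⁺_{i',i} = τ_{k,i}, the symplectic transvection of ℤ^m associated to the vertex k of Σ(i). -/

import Mathlib

open scoped Classical

namespace SLC

variable {V : Type*} [DecidableEq V]

/-- The simply-laced Coxeter matrix associated with a simple graph `P`:
`M i i = 1`, `M i j = 3` if `i` and `j` are adjacent, and `M i j = 2` otherwise. -/
noncomputable def coxeterMatrix (P : SimpleGraph V) : CoxeterMatrix V where
  M := fun i j => if i = j then 1 else if P.Adj i j then 3 else 2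
  isSymm := by
    ext i j
    show (if j = i then 1 else if P.Adj j i then 3 else 2) = (if i = j then 1 else if P.Adj i j then 3 else 2)
    by_cases h : i = j
    · subst h; rfl
    · rw [if_neg (Ne.symm h), if_neg h]
      by_cases ha : P.Adj i j
      · rw [if_pos (P.adj_symm ha), if_pos ha]
      · rw [if_neg (fun hc => ha (P.adj_symm hc)), if_neg ha]
  diagonal := by intro i; simp
  off_diagonal := by
    intro i i' h
    show (if i = i' then 1 else if P.Adj i i' then 3 else 2) ≠ 1
    rw [if_neg h]
    split <;> omega

/-- `e` is a reduced word for the pair `(u, v)`: the subword of entries with negative sign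
(first component `false`), with signs forgotten, is a reduced word for `u`, and the subword of
entries with positive sign is a reduced word for `v`. -/
def IsRWordPair {W : Type*} [Group W] (P : SimpleGraph V)
    (cs : CoxeterSystem (coxeterMatrix P) W) (u v : W) {m : ℕ}
    (e : Fin m → Bool × V) : Prop :=
  cs.wordProd (((List.ofFn e).filter fun p => !p.1).map Prod.snd) = u ∧
    (((List.ofFn e).filter fun p => !p.1).map Prod.snd).length = cs.length u ∧
    cs.wordProd (((List.ofFn e).filter fun p => p.1).map Prod.snd) = v ∧
    (((List.ofFn e).filter fun p => p.1).map Prod.snd).length = cs.length v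

/-- `k = l⁻`: `k` is the largest index smaller than `l` carrying the same letter of `P`. -/
def IsPred {m : ℕ} (e : Fin m → Bool × V) (k l : Fin m) : Prop :=
  k < l ∧ (e k).2 = (e l).2 ∧ ∀ j, k < j → j < l → (e j).2 ≠ (e l).2

/-- The index `l` is `e`-bounded: `l⁻ > 0`, i.e. `l` has a predecessor. -/
def BoundedIdx {m : ℕ} (e : Fin m → Bool × V) (l : Fin m) : Prop :=
  ∃ k, IsPred e k l

/-- Conditions (ii) and (iii) of Definition 3.1 (inclined edges), for `k < l`. -/
def InclCond {m : ℕ} (P : SimpleGraph V) (e : Fin m → Bool × V) (k l : Fin m) : Prop :=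
  k < l ∧ P.Adj (e k).2 (e l).2 ∧
    ((∃ p, IsPred e p l ∧ p < k ∧ (∀ q, IsPred e q k → q < p) ∧ (e p).1 = (e k).1) ∨
     (∃ q, IsPred e q k ∧ (∀ p, IsPred e p l → p < q) ∧ (e q).1 = !(e k).1))

/-- `a → b` is a directed edge of the graph `Σ(e)`. -/
def DirEdge {m : ℕ} (P : SimpleGraph V) (e : Fin m → Bool × V) (a b : Fin m) : Prop :=
  (IsPred e a b ∧ (e a).1 = true) ∨ (IsPred e b a ∧ (e b).1 = false) ∨
    (InclCond P e a b ∧ (e a).1 = false) ∨ (InclCond P e b a ∧ (e b).1 = true)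

/-- `{a, b}` is an edge of the graph `Σ(e)` (in some direction). -/
def UEdge {m : ℕ} (P : SimpleGraph V) (e : Fin m → Bool × V) (a b : Fin m) : Prop :=
  DirEdge P e a b ∨ DirEdge P e b a

/-- Adjacency in the doubled graph `P̃`. -/
def TAdj (P : SimpleGraph V) (p q : Bool × V) : Prop :=
  p.1 = q.1 ∧ P.Adj p.2 q.2

/-- The negative of a letter of `P̃`. -/
def negEnt (p : Bool × V) : Bool × V := (!p.1, p.2)

/-- The combinatorial data of a 2- or 3-move: the (consecutive) positions involved. -/
inductive MoveSpec (m : ℕ) where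
  | two (a b : Fin m)
  | three (a b c : Fin m)

/-- The position of a move (the last of the positions involved). -/
def MoveSpec.pos {m : ℕ} : MoveSpec m → Fin m
  | .two _ b => b
  | .three _ _ c => c

/-- `e'` is obtained from `e` by the 2- or 3-move described by `s`. -/
def IsMove {m : ℕ} (P : SimpleGraph V) (e e' : Fin m → Bool × V) : MoveSpec m → Prop
  | .two a b => (b : ℕ) = (a : ℕ) + 1 ∧ ¬ TAdj P (e a) (e b) ∧
      e' a = e b ∧ e' b = e a ∧ ∀ l, l ≠ a → l ≠ b → e' l = e l
  | .three a b c => (b : ℕ) = (a : ℕ) + 1 ∧ (c : ℕ) = (b : ℕ) + 1 ∧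
      e c = e a ∧ TAdj P (e b) (e c) ∧
      e' a = e b ∧ e' b = e a ∧ e' c = e b ∧ ∀ l, l ≠ a → l ≠ b → l ≠ c → e' l = e l

/-- A move is trivial if it is a 2-move interchanging entries which are not opposite. -/
def MoveTrivial {m : ℕ} (e : Fin m → Bool × V) : MoveSpec m → Prop
  | .two a b => e b ≠ negEnt (e a)
  | .three _ _ _ => False

/-- The permutation `σ` associated with a move. -/
noncomputable def moveSigma {m : ℕ} (e : Fin m → Bool × V) : MoveSpec m → Equiv.Perm (Fin m)
  | .two a b => if e b = negEnt (e a) then 1 else Equiv.swap a b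
  | .three a b _ => Equiv.swap a b

/-- The skew-symmetric form `Ω` of the graph `Σ(e)`, over a commutative ring `R`. -/
noncomputable def omegaForm (R : Type*) [CommRing R] {m : ℕ} (P : SimpleGraph V)
    (e : Fin m → Bool × V) (x y : Fin m → R) : R :=
  ∑ a : Fin m, ∑ b : Fin m, if DirEdge P e a b then x a * y b - x b * y a else 0

/-- The symplectic transvection `τ_k` of the graph `Σ(e)`, over `R`. -/
noncomputable def transv (R : Type*) [CommRing R] {m : ℕ} (P : SimpleGraph V)
    (e : Fin m → Bool × V) (k : Fin m) (x : Fin m → R) : Fin m → R :=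
  x - omegaForm R P e x (Pi.single k 1) • (Pi.single k 1 : Fin m → R)

/-- The group `Γ_e ⊆ GL_m(ℤ)` generated by the transvections `τ_k`, `k ∈ B(e)`. -/
noncomputable def Gamma {m : ℕ} (P : SimpleGraph V) (e : Fin m → Bool × V) :
    Subgroup ((Fin m → ℤ) ≃ₗ[ℤ] (Fin m → ℤ)) :=
  Subgroup.closure {g | ∃ k, BoundedIdx e k ∧ ⇑g = transv ℤ P e k}

/-- The group `Γ_e(F₂)` of linear transformations of `F₂^m` generated by the reductions
modulo 2 of the transvections `τ_k`, `k ∈ B(e)`. -/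
noncomputable def GammaF2 {m : ℕ} (P : SimpleGraph V) (e : Fin m → Bool × V) :
    Subgroup (Equiv.Perm (Fin m → ZMod 2)) :=
  Subgroup.closure {g | ∃ k, BoundedIdx e k ∧ ⇑g = transv (ZMod 2) P e k}

/-- The map `φ⁺` associated with a move. -/
noncomputable def phiP {m : ℕ} (P : SimpleGraph V) (e : Fin m → Bool × V) (s : MoveSpec m)
    (x : Fin m → ℤ) : Fin m → ℤ := fun l =>
  if l = s.pos ∧ ¬ MoveTrivial e s then
    (∑ a : Fin m, if DirEdge P e a s.pos then x a else 0) - x s.pos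
  else x (moveSigma e s l)

/-- The map `φ⁻` associated with a move. -/
noncomputable def phiM {m : ℕ} (P : SimpleGraph V) (e : Fin m → Bool × V) (s : MoveSpec m)
    (x : Fin m → ℤ) : Fin m → ℤ := fun l =>
  if l = s.pos ∧ ¬ MoveTrivial e s then
    (∑ b : Fin m, if DirEdge P e s.pos b then x b else 0) - x s.pos
  else x (moveSigma e s l)


set_option linter.unusedSectionVars false

section Auxiliary

lemma isPred_unique {m : ℕ} {e : Fin m → Bool × V} {k k' l : Fin m}
    (h : IsPred e k l) (h' : IsPred e k' l) : k = k' := by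
  rcases lt_trichotomy k k' with hlt | heq | hlt
  · exact absurd h'.2.1 (h.2.2 k' hlt h'.1)
  · exact heq
  · exact absurd h.2.1 (h'.2.2 k hlt h.1)

lemma not_dirEdge_self {m : ℕ} (P : SimpleGraph V) (e : Fin m → Bool × V) (a : Fin m) :
    ¬ DirEdge P e a a := by
  rintro (⟨h, -⟩ | ⟨h, -⟩ | ⟨h, -⟩ | ⟨h, -⟩) <;> exact lt_irrefl a h.1

lemma omega_single {R : Type*} [CommRing R] {m : ℕ} (P : SimpleGraph V) (e : Fin m → Bool × V)
    (k : Fin m) (x : Fin m → R) :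
    omegaForm R P e x (Pi.single k 1) =
      (∑ a : Fin m, if DirEdge P e a k then x a else 0)
        - (∑ b : Fin m, if DirEdge P e k b then x b else 0) := by
  unfold omegaForm
  have key : ∀ a b : Fin m,
      (if DirEdge P e a b then x a * (Pi.single k 1 : Fin m → R) b - x b * (Pi.single k 1 : Fin m → R) a else 0)
        = (if b = k then (if DirEdge P e a b then x a else 0) else 0)
          - (if a = k then (if DirEdge P e a b then x b else 0) else 0) := by
    intro a b
    rw [Pi.single_apply, Pi.single_apply]
    by_cases hD : DirEdge P e a b <;> by_cases hbk : b = k <;> by_cases hak : a = k <;>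
      simp only [hD, hbk, hak, if_true, if_false, if_pos, if_neg, not_false_iff] <;>
      simp [hD, hbk, hak] <;> split_ifs <;> ring
  simp only [key, Finset.sum_sub_distrib]
  congr 1
  · refine Finset.sum_congr rfl fun a _ => ?_
    simp [Finset.sum_ite_eq']
  · have h2 : ∀ a : Fin m,
        (∑ b : Fin m, if a = k then (if DirEdge P e a b then x b else 0) else 0)
          = if a = k then (∑ b : Fin m, if DirEdge P e a b then x b else 0) else 0 := by
      intro a; by_cases hak : a = k <;> simp [hak]
    simp only [h2]
    simp [Finset.sum_ite_eq']

lemma phiP_pos {m : ℕ} (P : SimpleGraph V) (w : Fin m → Bool × V) (s : MoveSpec m)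
    (hnt : ¬ MoveTrivial w s) (x : Fin m → ℤ) :
    phiP P w s x s.pos = (∑ a : Fin m, if DirEdge P w a s.pos then x a else 0) - x s.pos := by
  simp [phiP, hnt]

lemma phiP_ne {m : ℕ} (P : SimpleGraph V) (w : Fin m → Bool × V) (s : MoveSpec m)
    (x : Fin m → ℤ) {l : Fin m} (hl : l ≠ s.pos) :
    phiP P w s x l = x (moveSigma w s l) := by
  simp [phiP, hl]

lemma main_calc {m : ℕ} (P : SimpleGraph V) (w w' : Fin m → Bool × V) (s : MoveSpec m)
    (hnt : ¬ MoveTrivial w s) (hnt' : ¬ MoveTrivial w' s)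
    (hσ : moveSigma w' s = moveSigma w s)
    (hfix : moveSigma w s s.pos = s.pos)
    (hinv : ∀ l, moveSigma w s (moveSigma w s l) = l)
    (hkey : ∀ l, DirEdge P w' l s.pos ↔ DirEdge P w s.pos (moveSigma w s l)) :
    phiP P w' s ∘ phiP P w s = transv ℤ P w s.pos := by
  funext x l
  simp only [Function.comp_apply]
  by_cases hl : l = s.pos
  · subst hl
    have hsum : (∑ a : Fin m, if DirEdge P w' a s.pos then phiP P w s x a else 0)
        = ∑ b : Fin m, if DirEdge P w s.pos b then x b else 0 := by
      rw [← Equiv.sum_comp (moveSigma w s) (fun b => if DirEdge P w s.pos b then x b else 0)]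
      refine Finset.sum_congr rfl fun a _ => ?_
      by_cases hD : DirEdge P w' a s.pos
      · have hak : a ≠ s.pos := fun h => not_dirEdge_self P w' s.pos (h ▸ hD)
        rw [if_pos hD, if_pos ((hkey a).1 hD), phiP_ne P w s x hak]
      · rw [if_neg hD, if_neg (fun h => hD ((hkey a).2 h))]
    rw [phiP_pos P w' s hnt', hsum, phiP_pos P w s hnt]
    simp only [transv, Pi.sub_apply, Pi.smul_apply, smul_eq_mul, Pi.single_eq_same, mul_one,
      omega_single]
    ring
  · have h2 : moveSigma w s l ≠ s.pos := by
      intro h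
      apply hl
      have h3 := hinv l
      rw [h, hfix] at h3
      exact h3.symm
    rw [phiP_ne P w' s _ hl, hσ, phiP_ne P w s x h2, hinv]
    simp [transv, Pi.single_eq_of_ne hl]

lemma key2 {m : ℕ} (P : SimpleGraph V) (e e' : Fin m → Bool × V) (a b : Fin m)
    (hb : (b : ℕ) = (a : ℕ) + 1)
    (hob : e b = negEnt (e a))
    (h'a : e' a = e b) (h'b : e' b = e a)
    (h'rest : ∀ l, l ≠ a → l ≠ b → e' l = e l) :
    ∀ l, DirEdge P e' l b ↔ DirEdge P e b l := by
  have hab : a < b := by rw [Fin.lt_def]; omega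
  have hv2 : (e b).2 = (e a).2 := by rw [hob]; rfl
  have hs : (e b).1 = !(e a).1 := by rw [hob]; rfl
  have hv' : ∀ l, (e' l).2 = (e l).2 := by
    intro l
    by_cases h1 : l = a
    · subst h1; rw [h'a, hv2]
    · by_cases h2 : l = b
      · subst h2; rw [h'b, hv2]
      · rw [h'rest l h1 h2]
  have hnobet : ∀ j : Fin m, a < j → j < b → False := by
    intro j hj1 hj2; rw [Fin.lt_def] at hj1 hj2; omega
  have hpab : IsPred e a b := ⟨hab, hv2.symm, fun j h1 h2 => (hnobet j h1 h2).elim⟩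
  have predOf : ∀ (f : Fin m → Bool × V), (∀ l, (f l).2 = (e l).2) →
      ∀ p q : Fin m, IsPred f p q ↔ IsPred e p q := by
    intro f hf p q
    unfold IsPred
    simp only [hf]
  have huniq : ∀ l, IsPred e l b → l = a := fun l h => isPred_unique h hpab
  have noIncl : ∀ (f : Fin m → Bool × V), (∀ l, (f l).2 = (e l).2) →
      ∀ l, ¬ InclCond P f l b := by
    intro f hf l hC
    obtain ⟨hlb, -, hdis⟩ := hC
    rcases hdis with ⟨p, hp, hpl, -, -⟩ | ⟨q, hq, hall, -⟩
    · have hpa : p = a := huniq p ((predOf f hf p b).1 hp)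
      subst hpa
      exact hnobet l hpl hlb
    · have haq : a < q := hall a ((predOf f hf a b).2 hpab)
      have hql : q < l := ((predOf f hf q l).1 hq).1
      exact hnobet q haq (lt_trans hql hlb)
  have inclTo : ∀ (f g : Fin m → Bool × V), (∀ l, (f l).2 = (e l).2) →
      (∀ l, (g l).2 = (e l).2) → (g a).1 = !((g b).1) →
      ∀ l, InclCond P f b l → InclCond P g b l := by
    rintro f g hf hg hgs l ⟨hbl, hadj, hdis⟩
    refine ⟨hbl, by rw [hf b, hf l] at hadj; rw [hg b, hg l]; exact hadj, Or.inr ?_⟩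
    rcases hdis with ⟨p, hp, hpb, hall, -⟩ | ⟨q, hq, hall, -⟩
    · exact (hnobet p (hall a ((predOf f hf a b).2 hpab)) hpb).elim
    · have hqa : q = a := huniq q ((predOf f hf q b).1 hq)
      subst hqa
      exact ⟨q, (predOf g hg q b).2 hpab,
        fun p hp => hall p ((predOf f hf p l).2 ((predOf g hg p l).1 hp)), hgs⟩
  intro l
  constructor
  · rintro (⟨h1, h2⟩ | ⟨h1, h2⟩ | ⟨h1, h2⟩ | ⟨h1, h2⟩)
    · have hla : l = a := huniq l ((predOf e' hv' l b).1 h1)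
      subst hla
      rw [h'a, hs] at h2
      refine Or.inr (Or.inl ⟨hpab, ?_⟩)
      simpa using h2
    · rw [h'b] at h2
      refine Or.inl ⟨(predOf e' hv' b l).1 h1, ?_⟩
      simp [hs, h2]
    · exact absurd h1 (noIncl e' hv' l)
    · rw [h'b] at h2
      refine Or.inr (Or.inr (Or.inl
        ⟨inclTo e' e hv' (fun _ => rfl) (by rw [hs, Bool.not_not]) l h1, ?_⟩))
      simp [hs, h2]
  · rintro (⟨h1, h2⟩ | ⟨h1, h2⟩ | ⟨h1, h2⟩ | ⟨h1, h2⟩)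
    · refine Or.inr (Or.inl ⟨(predOf e' hv' b l).2 h1, ?_⟩)
      rw [h'b]
      rw [hs] at h2
      simpa using h2
    · have hla : l = a := huniq l h1
      subst hla
      refine Or.inl ⟨(predOf e' hv' l b).2 hpab, ?_⟩
      simp [h'a, hs, h2]
    · refine Or.inr (Or.inr (Or.inr
        ⟨inclTo e e' (fun _ => rfl) hv' (by rw [h'a, h'b]; exact hs) l h1, ?_⟩))
      rw [h'b]
      rw [hs] at h2
      simpa using h2
    · exact absurd h1 (noIncl e (fun _ => rfl) l)

lemma key3 {m : ℕ} (P : SimpleGraph V) (e e' : Fin m → Bool × V) (a b c : Fin m)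
    (hb : (b : ℕ) = (a : ℕ) + 1) (hc : (c : ℕ) = (b : ℕ) + 1)
    (hca : e c = e a) (hT : TAdj P (e b) (e c))
    (h'a : e' a = e b) (h'b : e' b = e a) (h'c : e' c = e b)
    (h'rest : ∀ l, l ≠ a → l ≠ b → l ≠ c → e' l = e l) :
    ∀ l, DirEdge P e' l c ↔ DirEdge P e c (Equiv.swap a b l) := by
  have hab : a < b := by rw [Fin.lt_def]; omega
  have hbc : b < c := by rw [Fin.lt_def]; omega
  have hac : a < c := by rw [Fin.lt_def]; omega
  have hvc : (e c).2 = (e a).2 := by rw [hca]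
  have hsc : (e c).1 = (e a).1 := by rw [hca]
  have hadj : P.Adj (e b).2 (e a).2 := by have h := hT.2; rwa [hvc] at h
  have hne : (e b).2 ≠ (e a).2 := hadj.ne
  have hsb : (e b).1 = (e a).1 := hT.1.trans hsc
  have hgt : ∀ j : Fin m, c < j → e' j = e j := by
    intro j hj
    rw [Fin.lt_def] at hj
    refine h'rest j ?_ ?_ ?_ <;> (rintro rfl; omega)
  have betw_ac : ∀ j : Fin m, a < j → j < c → j = b := by
    intro j h1 h2
    rw [Fin.lt_def] at h1 h2
    exact Fin.ext (by omega)
  have Pe_ac : IsPred e a c := by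
    refine ⟨hac, hvc.symm, ?_⟩
    intro j h1 h2
    rw [betw_ac j h1 h2, hvc]
    exact hne
  have Pe'_ac : IsPred e' a c := by
    refine ⟨hac, by rw [h'a, h'c], ?_⟩
    intro j h1 h2
    rw [betw_ac j h1 h2, h'b, h'c]
    exact fun h => hne h.symm
  have uniq_c : ∀ l, IsPred e l c → l = a := fun l h => isPred_unique h Pe_ac
  have uniq'_c : ∀ l, IsPred e' l c → l = a := fun l h => isPred_unique h Pe'_ac
  have predb : ∀ q, IsPred e q b → q < a := by
    intro q hq
    have h1 : q < b := hq.1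
    have h2 : q ≠ a := by
      rintro rfl
      exact hne hq.2.1.symm
    have h3 : (q : ℕ) ≠ (a : ℕ) := fun h => h2 (Fin.ext h)
    rw [Fin.lt_def] at h1 ⊢
    omega
  have predb' : ∀ q, IsPred e' q b → q < a := by
    intro q hq
    have h1 : q < b := hq.1
    have h2 : q ≠ a := by
      rintro rfl
      have h4 := hq.2.1
      rw [h'a, h'b] at h4
      exact hne h4
    have h3 : (q : ℕ) ≠ (a : ℕ) := fun h => h2 (Fin.ext h)
    rw [Fin.lt_def] at h1 ⊢
    omega
  have T1 : ∀ l, c < l → (IsPred e' c l ↔ IsPred e b l) := by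
    intro l hcl
    have hel : e' l = e l := hgt l hcl
    constructor
    · rintro ⟨-, hv, hall⟩
      rw [h'c, hel] at hv
      refine ⟨lt_trans hbc hcl, hv, ?_⟩
      intro j h1 h2 hzz
      by_cases hjc : j = c
      · subst hjc
        rw [hvc, ← hv] at hzz
        exact hne hzz.symm
      · have hcj : c < j := by
          have h5 : (j : ℕ) ≠ (c : ℕ) := fun h => hjc (Fin.ext h)
          rw [Fin.lt_def] at h1 ⊢
          omega
        have h6 := hall j hcj h2
        rw [hgt j hcj, hel] at h6
        exact h6 hzz
    · rintro ⟨-, hv, hall⟩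
      refine ⟨hcl, by rw [h'c, hel]; exact hv, ?_⟩
      intro j h1 h2
      rw [hgt j h1, hel]
      exact hall j (lt_trans hbc h1) h2
  have T2 : ∀ l, c < l → (IsPred e' b l ↔ IsPred e c l) := by
    intro l hcl
    have hel : e' l = e l := hgt l hcl
    constructor
    · rintro ⟨-, hv, hall⟩
      rw [h'b, hel] at hv
      refine ⟨hcl, by rw [hvc]; exact hv, ?_⟩
      intro j h1 h2
      have h6 := hall j (lt_trans hbc h1) h2
      rw [hgt j h1, hel] at h6
      exact h6
    · rintro ⟨-, hv, hall⟩
      rw [hvc] at hv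
      refine ⟨lt_trans hbc hcl, by rw [h'b, hel]; exact hv, ?_⟩
      intro j h1 h2 hzz
      by_cases hjc : j = c
      · subst hjc
        rw [h'c, hel] at hzz
        exact hne (hzz.trans hv.symm)
      · have hcj : c < j := by
          have h5 : (j : ℕ) ≠ (c : ℕ) := fun h => hjc (Fin.ext h)
          rw [Fin.lt_def] at h1 ⊢
          omega
        rw [hgt j hcj, hel] at hzz
        exact hall j hcj h2 hzz
  intro l
  rcases lt_trichotomy l c with hl | rfl | hl
  · by_cases hla : l = a
    · subst hla
      rw [Equiv.swap_apply_left]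
      constructor
      · rintro (⟨h1, h2⟩ | ⟨h1, h2⟩ | ⟨h1, h2⟩ | ⟨h1, h2⟩)
        · rw [h'a] at h2
          exact Or.inr (Or.inr (Or.inr
            ⟨⟨hbc, hT.2, Or.inl ⟨l, Pe_ac, hab, predb, hsb.symm⟩⟩, h2⟩))
        · exact absurd h1.1 (lt_asymm hac)
        · obtain ⟨-, hadj2, -⟩ := h1
          rw [h'a, h'c] at hadj2
          exact absurd hadj2 (P.loopless.irrefl _)
        · exact absurd h1.1 (lt_asymm hac)
      · rintro (⟨h1, h2⟩ | ⟨h1, h2⟩ | ⟨h1, h2⟩ | ⟨h1, h2⟩)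
        · exact absurd h1.1 (lt_asymm hbc)
        · exact absurd h1.2.1 (by rw [hvc]; exact hne)
        · exact absurd h1.1 (lt_asymm hbc)
        · exact Or.inl ⟨Pe'_ac, by rw [h'a]; exact h2⟩
    · by_cases hlb : l = b
      · subst hlb
        rw [Equiv.swap_apply_right]
        constructor
        · rintro (⟨h1, h2⟩ | ⟨h1, h2⟩ | ⟨h1, h2⟩ | ⟨h1, h2⟩)
          · have h4 := h1.2.1
            rw [h'b, h'c] at h4
            exact absurd h4 (fun h => hne h.symm)
          · exact absurd h1.1 (lt_asymm hbc)
          · rw [h'b] at h2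
            exact Or.inr (Or.inl ⟨Pe_ac, h2⟩)
          · exact absurd h1.1 (lt_asymm hbc)
        · rintro (⟨h1, h2⟩ | ⟨h1, h2⟩ | ⟨h1, h2⟩ | ⟨h1, h2⟩)
          · exact absurd h1.1 (lt_asymm hac)
          · refine Or.inr (Or.inr (Or.inl ⟨⟨hbc, by rw [h'b, h'c]; exact hadj.symm,
              Or.inl ⟨a, Pe'_ac, hab, predb', by rw [h'a, h'b]; exact hsb⟩⟩,
              by rw [h'b]; exact h2⟩))
          · exact absurd h1.1 (lt_asymm hac)
          · obtain ⟨-, hadj2, -⟩ := h1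
            rw [hvc] at hadj2
            exact absurd hadj2 (P.loopless.irrefl _)
      · have hla2 : l < a := by
          have hq1 : (l : ℕ) ≠ (a : ℕ) := fun h => hla (Fin.ext h)
          have hq2 : (l : ℕ) ≠ (b : ℕ) := fun h => hlb (Fin.ext h)
          rw [Fin.lt_def] at hl ⊢
          omega
        rw [Equiv.swap_apply_of_ne_of_ne hla hlb]
        have noInclSmall : ∀ (f : Fin m → Bool × V), (∀ x, IsPred f x c → x = a) →
            IsPred f a c → ¬ InclCond P f l c := by
          rintro f hu hp ⟨hlc, -, ⟨p, hpc, hpl, -, -⟩ | ⟨q, hq, hall, -⟩⟩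
          · rw [hu p hpc] at hpl
            exact absurd hpl (lt_asymm hla2)
          · exact absurd (lt_trans hq.1 hla2) (lt_asymm (hall a hp))
        constructor
        · rintro (⟨h1, h2⟩ | ⟨h1, h2⟩ | ⟨h1, h2⟩ | ⟨h1, h2⟩)
          · exact absurd (uniq'_c l h1) hla
          · exact absurd h1.1 (lt_asymm (lt_trans hla2 hac))
          · exact absurd h1 (noInclSmall e' uniq'_c Pe'_ac)
          · exact absurd h1.1 (lt_asymm (lt_trans hla2 hac))
        · rintro (⟨h1, h2⟩ | ⟨h1, h2⟩ | ⟨h1, h2⟩ | ⟨h1, h2⟩)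
          · exact absurd h1.1 (lt_asymm (lt_trans hla2 hac))
          · exact absurd (uniq_c l h1) hla
          · exact absurd h1.1 (lt_asymm (lt_trans hla2 hac))
          · exact absurd h1 (noInclSmall e uniq_c Pe_ac)
  · rw [Equiv.swap_apply_of_ne_of_ne (ne_of_gt hac) (ne_of_gt hbc)]
    exact iff_of_false (not_dirEdge_self P e' _) (not_dirEdge_self P e _)
  · have hel : e' l = e l := hgt l hl
    rw [Equiv.swap_apply_of_ne_of_ne (ne_of_gt (lt_trans hac hl)) (ne_of_gt (lt_trans hbc hl))]
    constructor
    · rintro (⟨h1, h2⟩ | ⟨h1, h2⟩ | ⟨h1, h2⟩ | ⟨h1, h2⟩)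
      · exact absurd (uniq'_c l h1) (ne_of_gt (lt_trans hac hl))
      · have hbl : IsPred e b l := (T1 l hl).1 h1
        rw [h'c] at h2
        refine Or.inr (Or.inr (Or.inl ⟨⟨hl, ?_,
          Or.inl ⟨b, hbl, hbc, fun q hq => by rw [uniq_c q hq]; exact hab, hT.1⟩⟩,
          by rw [hsc, ← hsb]; exact h2⟩))
        rw [hvc, ← hbl.2.1]
        exact hadj.symm
      · exact absurd h1.1 (lt_asymm hl)
      · obtain ⟨-, -, ⟨p, hp, hpc, hall, hps⟩ | ⟨q, hq, hall, hqs⟩⟩ := h1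
        · have hap : a < p := hall a Pe'_ac
          have hpb : p = b := betw_ac p hap hpc
          subst hpb
          rw [h'c] at h2
          exact Or.inl ⟨(T2 l hl).1 hp, by rw [hsc, ← hsb]; exact h2⟩
        · rw [uniq'_c q hq] at hqs
          rw [h'a, h'c] at hqs
          exact absurd hqs (by simp)
    · rintro (⟨h1, h2⟩ | ⟨h1, h2⟩ | ⟨h1, h2⟩ | ⟨h1, h2⟩)
      · refine Or.inr (Or.inr (Or.inr ⟨⟨hl, ?_,
          Or.inl ⟨b, (T2 l hl).2 h1, hbc, fun q hq => by rw [uniq'_c q hq]; exact hab,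
            by rw [h'b, h'c]; exact hsb.symm⟩⟩,
          by rw [h'c, hsb, ← hsc]; exact h2⟩))
        rw [h'c, hel, ← h1.2.1]
        exact hT.2
      · exact absurd (uniq_c l h1) (ne_of_gt (lt_trans hac hl))
      · obtain ⟨-, -, ⟨p, hp, hpc, hall, hps⟩ | ⟨q, hq, hall, hqs⟩⟩ := h1
        · have hap : a < p := hall a Pe_ac
          have hpb : p = b := betw_ac p hap hpc
          subst hpb
          exact Or.inr (Or.inl ⟨(T1 l hl).2 hp, by rw [h'c, hsb, ← hsc]; exact h2⟩)
        · rw [uniq_c q hq, hsc] at hqs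
          exact absurd hqs (by simp)
      · exact absurd h1.1 (lt_asymm hl)

end Auxiliary

variable {V : Type*} [DecidableEq V] [Fintype V] {W : Type*} [Group W]

/-- Theorem 3.8 (b). -/
theorem phi_squared (P : SimpleGraph V) (cs : CoxeterSystem (coxeterMatrix P) W)
    (u v : W) {m : ℕ} (hm : m = cs.length u + cs.length v)
    (e e' : Fin m → Bool × V) (he : IsRWordPair P cs u v e) (he' : IsRWordPair P cs u v e')
    (s : MoveSpec m) (hmv : IsMove P e e' s) (hnt : ¬ MoveTrivial e s) :
    phiP P e' s ∘ phiP P e s = transv ℤ P e s.pos := by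
  cases s with
  | two a b =>
    obtain ⟨hb, hnadj, h'a, h'b, h'rest⟩ := hmv
    have hob : e b = negEnt (e a) := not_not.mp hnt
    have hob' : e' b = negEnt (e' a) := by
      rw [h'a, h'b, hob]
      simp [negEnt]
    have hσe : moveSigma e (MoveSpec.two a b) = 1 := by simp [moveSigma, hob]
    have hσe' : moveSigma e' (MoveSpec.two a b) = 1 := by simp [moveSigma, hob']
    refine main_calc P e e' (MoveSpec.two a b) hnt (not_not_intro hob') ?_ ?_ ?_ ?_
    · rw [hσe, hσe']
    · rw [hσe]; rfl
    · intro l; rw [hσe]; rfl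
    · intro l
      have h := key2 P e e' a b hb hob h'a h'b h'rest l
      rw [hσe]
      simpa [MoveSpec.pos] using h
  | three a b c =>
    obtain ⟨hb, hc, hca, hT, h'a, h'b, h'c, h'rest⟩ := hmv
    have hac : a < c := by rw [Fin.lt_def]; omega
    have hbc : b < c := by rw [Fin.lt_def]; omega
    refine main_calc P e e' (MoveSpec.three a b c) hnt (fun h => h) rfl ?_ ?_ ?_
    · show Equiv.swap a b c = c
      exact Equiv.swap_apply_of_ne_of_ne (ne_of_gt hac) (ne_of_gt hbc)
    · intro l
      show Equiv.swap a b (Equiv.swap a b l) = l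
      exact Equiv.swap_apply_self a b l
    · intro l
      exact key3 P e e' a b c hb hc hca hT h'a h'b h'c h'rest l

end SLC
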